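/- Let 0 < ω < 1/2 and 1/2 − √(ω−ω²) < τ < 1/2, and set z = (2τ−1 + i·√(4ω(1−ω)−(1−2τ)²)) / (2(1−ω)). Then 2ω·log₂|z| − 2τ·log₂|1+z| − 2(1−τ)·log₂|1−z| + 2H(ω) = H(ω) + H(τ) − 1, where H is the binary entropy function. -/

import Mathlib

/-- The binary entropy function `H(x) = −x log₂ x − (1−x) log₂ (1−x)`. -/
noncomputable def binH (x : ℝ) : ℝ :=
  -x * Real.logb 2 x - (1 - x) * Real.logb 2 (1 - x)

/-- with `z = (2τ−1 + i√(4ω(1−ω)−(1−2τ)²))/(2(1−ω))`,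
`2ω log₂|z| − 2τ log₂|1+z| − 2(1−τ) log₂|1−z| + 2H(ω) = H(ω) + H(τ) − 1`. -/
theorem exponent_simplification (ω τ : ℝ) (hω0 : 0 < ω) (hω : ω < 1 / 2)
    (hτ1 : 1 / 2 - Real.sqrt (ω - ω ^ 2) < τ) (hτ2 : τ < 1 / 2) :
    let z : ℂ := (((2 * τ - 1 : ℝ) : ℂ) +
      Complex.I * ((Real.sqrt (4 * ω * (1 - ω) - (1 - 2 * τ) ^ 2) : ℝ) : ℂ)) /
      (((2 * (1 - ω) : ℝ) : ℂ));
    2 * ω * Real.logb 2 ‖z‖ - 2 * τ * Real.logb 2 ‖1 + z‖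
      - 2 * (1 - τ) * Real.logb 2 ‖1 - z‖ + 2 * binH ω =
      binH ω + binH τ - 1 := by
  intro z
  have h1ω : (0:ℝ) < 1 - ω := by linarith
  have hτ0 : (0:ℝ) < τ := by
    have h1 : Real.sqrt (ω - ω ^ 2) ≤ Real.sqrt (1/4) := by
      apply Real.sqrt_le_sqrt; nlinarith
    have h2 : Real.sqrt (1/4 : ℝ) = 1/2 := by
      rw [show (1/4:ℝ) = (1/2)^2 by norm_num, Real.sqrt_sq (by norm_num : (0:ℝ) ≤ 1/2)]
    linarith
  have h1τ : (0:ℝ) < 1 - τ := by linarith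
  have hK : 0 < 4 * ω * (1 - ω) - (1 - 2 * τ) ^ 2 := by
    have h : 1/2 - τ < Real.sqrt (ω - ω ^ 2) := by linarith
    have h2 : (1/2 - τ)^2 < ω - ω^2 := (Real.lt_sqrt (by linarith)).mp h
    nlinarith
  have hs2 : (Real.sqrt (4 * ω * (1 - ω) - (1 - 2 * τ) ^ 2)) ^ 2
      = 4 * ω * (1 - ω) - (1 - 2 * τ) ^ 2 := Real.sq_sqrt hK.le
  have hdpos : (0:ℝ) < 2 * (1 - ω) := by linarith
  have hdne : ((2 * (1 - ω) : ℝ) : ℂ) ≠ 0 := by exact_mod_cast hdpos.ne'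
  have key : ∀ a b : ℝ, (‖((((a:ℝ):ℂ) + Complex.I * ((b:ℝ):ℂ)) / ((2*(1-ω):ℝ):ℂ))‖)^2
      = (a^2 + b^2) / (2*(1-ω))^2 := by
    intro a b
    rw [norm_div, div_pow, mul_comm Complex.I, Complex.sq_norm,
      Complex.normSq_add_mul_I, Complex.norm_real, Real.norm_eq_abs, abs_of_pos hdpos]
  have h1z : 1 + z = ((((2*(1-ω)) + (2*τ-1) : ℝ):ℂ)
      + Complex.I * ((Real.sqrt (4 * ω * (1 - ω) - (1 - 2 * τ) ^ 2) : ℝ):ℂ)) / ((2*(1-ω):ℝ):ℂ) := by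
    show 1 + (((2 * τ - 1 : ℝ) : ℂ) +
      Complex.I * ((Real.sqrt (4 * ω * (1 - ω) - (1 - 2 * τ) ^ 2) : ℝ) : ℂ)) /
      (((2 * (1 - ω) : ℝ) : ℂ)) = _
    rw [eq_div_iff hdne, add_mul, div_mul_cancel₀ _ hdne]
    push_cast; ring
  have h2z : 1 - z = ((((2*(1-ω)) - (2*τ-1) : ℝ):ℂ)
      + Complex.I * ((-Real.sqrt (4 * ω * (1 - ω) - (1 - 2 * τ) ^ 2) : ℝ):ℂ)) / ((2*(1-ω):ℝ):ℂ) := by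
    show 1 - (((2 * τ - 1 : ℝ) : ℂ) +
      Complex.I * ((Real.sqrt (4 * ω * (1 - ω) - (1 - 2 * τ) ^ 2) : ℝ) : ℂ)) /
      (((2 * (1 - ω) : ℝ) : ℂ)) = _
    rw [eq_div_iff hdne, sub_mul, div_mul_cancel₀ _ hdne]
    push_cast; ring
  have hA : (‖z‖)^2 = ω / (1 - ω) := by
    show (‖((((2*τ-1:ℝ):ℂ) +
      Complex.I * ((Real.sqrt (4 * ω * (1 - ω) - (1 - 2 * τ) ^ 2) : ℝ):ℂ)) / ((2*(1-ω):ℝ):ℂ))‖)^2 = _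
    rw [key, hs2]; field_simp; ring
  have hB : (‖(1 + z)‖)^2 = 2 * τ / (1 - ω) := by
    rw [h1z, key, hs2]; field_simp; ring
  have hC : (‖(1 - z)‖)^2 = 2 * (1 - τ) / (1 - ω) := by
    rw [h2z, key, neg_pow, hs2]
    norm_num
    field_simp; ring
  have hlog : ∀ x : ℝ, Real.logb 2 (x^2) = 2 * Real.logb 2 x := by
    intro x
    rw [Real.logb, Real.logb, Real.log_pow]
    push_cast; ring
  have eA : 2 * Real.logb 2 (‖z‖) = Real.logb 2 (ω / (1 - ω)) := by rw [← hA, hlog]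
  have eB : 2 * Real.logb 2 (‖(1 + z)‖) = Real.logb 2 (2 * τ / (1 - ω)) := by
    rw [← hB, hlog]
  have eC : 2 * Real.logb 2 (‖(1 - z)‖) = Real.logb 2 (2 * (1 - τ) / (1 - ω)) := by
    rw [← hC, hlog]
  have h22 : Real.logb 2 (2:ℝ) = 1 := by
    simp [Real.logb_self_eq_one]
  have goal : ω * (2 * Real.logb 2 (‖z‖)) - τ * (2 * Real.logb 2 (‖(1 + z)‖))
      - (1 - τ) * (2 * Real.logb 2 (‖(1 - z)‖)) + 2 * binH ω = binH ω + binH τ - 1 := by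
    rw [eA, eB, eC]
    rw [Real.logb_div hω0.ne' h1ω.ne', Real.logb_div (by positivity) h1ω.ne',
      Real.logb_div (by positivity) h1ω.ne',
      Real.logb_mul (by norm_num) hτ0.ne', Real.logb_mul (by norm_num) h1τ.ne', h22]
    unfold binH
    ring
  linarith [goal]
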